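/- Let A and B be unital rings and let F : Mod-B → Mod-A be an additive equivalence between the categories of right B-modules and right A-modules, and set E := F(B). Then the map sending b ∈ B to F(λ_b), where λ_b : B → B is left multiplication by b (a right B-module endomorphism of the regular module), is a ring isomorphism from B onto End_A(E), the endomorphism ring of the right A-module E. -/

import Mathlib

universe u


variable {B : Type u} [Ring B]

/-- Left multiplication `λ_b : x ↦ b * x` as an endomorphism of the right regular
`B`-module (a left module over `Bᵐᵒᵖ`). -/
def leftMulHom (b : B) : B →ₗ[Bᵐᵒᵖ] B where
  toFun x := b * x
  map_add' := mul_add b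
  map_smul' c x := by
    simp only [MulOpposite.smul_eq_mul_unop, RingHom.id_apply, mul_assoc]

open CategoryTheory

lemma leftMulHom_apply_one (g : B →ₗ[Bᵐᵒᵖ] B) : leftMulHom (g 1) = g := by
  refine LinearMap.ext fun x => ?_
  have : g (MulOpposite.op x • (1 : B)) = MulOpposite.op x • g 1 := g.map_smul _ _
  simpa [leftMulHom, MulOpposite.smul_eq_mul_unop] using this.symm

lemma leftMulHom_mul (a b : B) :
    leftMulHom (a * b) = (leftMulHom a).comp (leftMulHom b) := by
  refine LinearMap.ext fun x => ?_; simp [leftMulHom, mul_assoc]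

lemma leftMulHom_add (a b : B) :
    leftMulHom (a + b) = leftMulHom a + leftMulHom b := by
  refine LinearMap.ext fun x => ?_; simp [leftMulHom, add_mul]

/-- If `F : Mod-B → Mod-A` is an additive equivalence and `E := F(B)`,
then `b ↦ F(λ_b)` is a ring isomorphism from `B` onto `End_A(E)`. -/
theorem ringEquiv_end_of_additive_equivalence (A : Type u) [Ring A]
    (F : ModuleCat.{u} Bᵐᵒᵖ ≌ ModuleCat.{u} Aᵐᵒᵖ) [F.functor.Additive] :
    ∃ Φ : B ≃+* Module.End Aᵐᵒᵖ (F.functor.obj (ModuleCat.of Bᵐᵒᵖ B)),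
      ∀ b : B, (Φ b : Module.End Aᵐᵒᵖ (F.functor.obj (ModuleCat.of Bᵐᵒᵖ B))) =
        (F.functor.map (ModuleCat.ofHom (leftMulHom b))).hom := by
  classical
  let E := F.functor.obj (ModuleCat.of Bᵐᵒᵖ B)
  let ff := F.fullyFaithfulFunctor
  refine ⟨{
    toFun := fun b => (F.functor.map (ModuleCat.ofHom (leftMulHom b))).hom
    invFun := fun f =>
      (ff.preimage (ModuleCat.ofHom f : E ⟶ E)).hom (1 : B)
    left_inv := fun b => by
      have : ff.preimage (F.functor.map (ModuleCat.ofHom (leftMulHom b)))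
          = ModuleCat.ofHom (leftMulHom b) := ff.preimage_map _
      show (ff.preimage (F.functor.map (ModuleCat.ofHom (leftMulHom b)))).hom (1 : B) = b
      rw [this]
      exact mul_one b
    right_inv := fun f => by
      set g : B →ₗ[Bᵐᵒᵖ] B := (ff.preimage (ModuleCat.ofHom f : E ⟶ E)).hom
      have h1 : leftMulHom (g 1) = g := leftMulHom_apply_one g
      have : ModuleCat.ofHom (leftMulHom (g 1)) = ff.preimage (ModuleCat.ofHom f : E ⟶ E) := by
        rw [h1]; rfl
      have := congrArg F.functor.map this
      rw [ff.map_preimage] at this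
      exact congrArg ModuleCat.Hom.hom this
    map_mul' := fun a b => by
      have h := congrArg F.functor.map (congrArg ModuleCat.ofHom (leftMulHom_mul a b))
      have h2 : ModuleCat.ofHom ((leftMulHom a).comp (leftMulHom b)) =
          ModuleCat.ofHom (leftMulHom b) ≫ ModuleCat.ofHom (leftMulHom a) := rfl
      rw [h2, F.functor.map_comp] at h
      exact congrArg ModuleCat.Hom.hom h
    map_add' := fun a b => by
      have h := congrArg F.functor.map (congrArg ModuleCat.ofHom (leftMulHom_add a b))
      have h2 : ModuleCat.ofHom (leftMulHom a + leftMulHom b) =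
          ModuleCat.ofHom (leftMulHom a) + ModuleCat.ofHom (leftMulHom b) := rfl
      rw [h2, F.functor.map_add] at h
      exact congrArg ModuleCat.Hom.hom h }, fun b => rfl⟩
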